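/- arXiv:1702.03801 — 5 statements merged into one kernel-verified Lean document; each statement's English description precedes it below -/
import Mathlib

section
/- Let (X, {R_0,...,R_d}) be a symmetric association scheme, let i ∈ {1,...,d}, and let Γ = (X, R_i). If a and b are twins in Γ (a ≠ b and Γ(a) = Γ(b)), then there exists a nonempty subset S ⊆ {1,...,d} such that the connected components of the graph (X, ⋃_{j∈S} R_j) form a nontrivial partition of X (i.e., some component has more than one vertex and no component equals all of X) and a and b lie in the same component. -/
/-- A symmetric association scheme with `d` classes on a finite vertex set `X`:
a partition of `X × X` into nonempty symmetric relations `R 0, …, R d`, where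
`R 0` is the identity relation, together with intersection numbers `p i j k`. -/
structure SymAssocScheme (X : Type*) [Fintype X] (d : ℕ) where
  R : Fin (d + 1) → X → X → Prop
  R_nonempty : ∀ i, ∃ a b, R i a b
  R_symm : ∀ i a b, R i a b → R i b a
  R_zero : ∀ a b, R 0 a b ↔ a = b
  R_unique : ∀ a b, ∃! i, R i a b
  p : Fin (d + 1) → Fin (d + 1) → Fin (d + 1) → ℕ
  p_spec : ∀ (i j k : Fin (d + 1)) (a b : X), R k a b →
    {c : X | R i a c ∧ R j c b}.ncard = p i j k

namespace SymAssocScheme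

variable {X : Type*} [Fintype X] {d : ℕ}

/-- The (simple) graph `Γ = (X, R_i)` of the basis relation `R_i`. -/
def graph (A : SymAssocScheme X d) (i : Fin (d + 1)) : SimpleGraph X where
  Adj a b := a ≠ b ∧ A.R i a b
  symm := ⟨fun a b h => ⟨h.1.symm, A.R_symm i a b h.2⟩⟩
  loopless := ⟨fun a h => h.1 rfl⟩

/-- The unweighted distribution diagram `H_i` (with loops discarded):
`j ~ k` iff `p i j k + p i k j > 0`. -/
def diagram (A : SymAssocScheme X d) (i : Fin (d + 1)) : SimpleGraph (Fin (d + 1)) where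
  Adj j k := j ≠ k ∧ 0 < A.p i j k + A.p i k j
  symm := ⟨fun j k h => ⟨h.1.symm, by omega⟩⟩
  loopless := ⟨fun j h => h.1 rfl⟩

end SymAssocScheme

namespace SymAssocScheme

variable {X : Type*} [Fintype X] {d : ℕ}

/-- The graph `(X, ⋃_{j ∈ S} R_j)` of a union of basis relations. -/
def unionGraph (A : SymAssocScheme X d) (S : Set (Fin (d + 1))) : SimpleGraph X where
  Adj x y := x ≠ y ∧ ∃ j ∈ S, A.R j x y
  symm := ⟨fun x y h => ⟨h.1.symm, h.2.choose, h.2.choose_spec.1,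
    A.R_symm _ x y h.2.choose_spec.2⟩⟩
  loopless := ⟨fun x h => h.1 rfl⟩

end SymAssocScheme

open SymAssocScheme in
/-- Lemma 3.1: if `a` and `b` are twins in a basis relation `Γ = (X, R_i)` (`i ≠ 0`),
then the scheme is imprimitive: there is a nonempty set `S ⊆ {1, …, d}` such that the
connected components of `(X, ⋃_{j ∈ S} R_j)` form a nontrivial partition of `X`
(some component is not a singleton, and no component is all of `X`), and `a` and `b`
lie in the same component. -/
theorem twins_imply_imprimitive {X : Type*} [Fintype X] {d : ℕ}
    (A : SymAssocScheme X d) (i : Fin (d + 1)) (hi : i ≠ 0)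
    (a b : X) (hab : a ≠ b)
    (htwin : (A.graph i).neighborSet a = (A.graph i).neighborSet b) :
    ∃ S : Set (Fin (d + 1)), S.Nonempty ∧ (0 : Fin (d + 1)) ∉ S ∧
      (∃ c : (A.unionGraph S).ConnectedComponent, c.supp.Nontrivial) ∧
      (∀ c : (A.unionGraph S).ConnectedComponent, c.supp ≠ Set.univ) ∧
      (A.unionGraph S).Reachable a b := by
  classical
  set N : X → Set X := fun x => {c | A.R i x c} with hN
  have hirr : ∀ x : X, ¬ A.R i x x := by
    intro x hx
    obtain ⟨k, -, huniq⟩ := A.R_unique x x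
    exact hi ((huniq i hx).trans (huniq 0 ((A.R_zero x x).mpr rfl)).symm)
  have hNeq : ∀ x : X, (A.graph i).neighborSet x = N x := by
    intro x
    ext c
    constructor
    · exact fun h => h.2
    · intro h
      exact ⟨by rintro rfl; exact hirr _ h, h⟩
  have hcard0 : ∀ x : X, (N x).ncard = A.p i i 0 := by
    intro x
    have := A.p_spec i i 0 x x ((A.R_zero x x).mpr rfl)
    rw [← this]
    congr 1
    ext c
    simp only [hN, Set.mem_setOf_eq]
    exact ⟨fun h => ⟨h, A.R_symm i x c h⟩, fun h => h.1⟩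
  have hcardk : ∀ (k : Fin (d+1)) (x y : X), A.R k x y →
      (N x ∩ N y).ncard = A.p i i k := by
    intro k x y hxy
    have := A.p_spec i i k x y hxy
    rw [← this]
    congr 1
    ext c
    simp only [hN, Set.mem_inter_iff, Set.mem_setOf_eq]
    exact ⟨fun h => ⟨h.1, A.R_symm i y c h.2⟩, fun h => ⟨h.1, A.R_symm i c y h.2⟩⟩
  have hsub : ∀ (k : Fin (d+1)) (x y : X), A.R k x y → A.p i i k = A.p i i 0 →
      N x ⊆ N y := by
    intro k x y hxy hpk
    have h1 : (N x ∩ N y).ncard = (N x).ncard := by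
      rw [hcardk k x y hxy, hcard0 x, hpk]
    have h2 : N x ∩ N y = N x :=
      Set.eq_of_subset_of_ncard_le Set.inter_subset_left (le_of_eq h1.symm)
        (Set.toFinite _)
    intro c hc
    exact ((h2.symm ▸ hc : c ∈ N x ∩ N y)).2
  have hNequiv : ∀ (k : Fin (d+1)) (x y : X), A.R k x y → A.p i i k = A.p i i 0 →
      N x = N y := by
    intro k x y hxy hpk
    exact Set.Subset.antisymm (hsub k x y hxy hpk)
      (hsub k y x (A.R_symm k x y hxy) hpk)
  set S : Set (Fin (d+1)) := {k | k ≠ 0 ∧ A.p i i k = A.p i i 0} with hS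
  have hadj : ∀ x y : X, (A.unionGraph S).Adj x y ↔ (x ≠ y ∧ N x = N y) := by
    intro x y
    constructor
    · rintro ⟨hne, j, hjS, hj⟩
      exact ⟨hne, hNequiv j x y hj hjS.2⟩
    · rintro ⟨hne, hNxy⟩
      obtain ⟨k, hk, -⟩ := A.R_unique x y
      have hk0 : k ≠ 0 := by
        rintro rfl
        exact hne ((A.R_zero x y).mp hk)
      have hpk : A.p i i k = A.p i i 0 := by
        rw [← hcardk k x y hk, hNxy, Set.inter_self, hcard0]
      exact ⟨hne, k, ⟨hk0, hpk⟩, hk⟩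
  have hreach : ∀ x y : X, (A.unionGraph S).Reachable x y → N x = N y := by
    intro x y h
    obtain ⟨w⟩ := h
    induction w with
    | nil => rfl
    | cons h w ih => exact ((hadj _ _).mp h).2.trans ih
  have hNab : N a = N b := by
    rw [← hNeq a, ← hNeq b, htwin]
  have hadjab : (A.unionGraph S).Adj a b := (hadj a b).mpr ⟨hab, hNab⟩
  have hex : ∃ x y : X, N x ≠ N y := by
    by_contra hcon
    push_neg at hcon
    obtain ⟨u, v, huv⟩ := A.R_nonempty i
    have : v ∈ N v := by rw [← hcon u v]; exact huv
    exact hirr v this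
  obtain ⟨x, y, hxy⟩ := hex
  refine ⟨S, ?_, ?_, ?_, ?_, hadjab.reachable⟩
  · obtain ⟨hne, j, hjS, -⟩ := hadjab
    exact ⟨j, hjS⟩
  · rintro ⟨h0, -⟩
    exact h0 rfl
  · refine ⟨(A.unionGraph S).connectedComponentMk a, a, ?_, b, ?_, hab⟩
    · exact rfl
    · exact (SimpleGraph.ConnectedComponent.mem_supp_iff _ _).mpr
        (SimpleGraph.ConnectedComponent.sound hadjab.reachable.symm)
  · intro c
    induction c using SimpleGraph.ConnectedComponent.ind with
    | _ z =>
      intro hsupp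
      have hx : (A.unionGraph S).Reachable x z :=
        SimpleGraph.ConnectedComponent.exact
          ((SimpleGraph.ConnectedComponent.mem_supp_iff _ _).mp
            (hsupp ▸ Set.mem_univ x))
      have hy : (A.unionGraph S).Reachable y z :=
        SimpleGraph.ConnectedComponent.exact
          ((SimpleGraph.ConnectedComponent.mem_supp_iff _ _).mp
            (hsupp ▸ Set.mem_univ y))
      exact hxy ((hreach x z hx).trans (hreach y z hy).symm)
end

section
/- Let (X, {R_0,...,R_d}) be a symmetric association scheme, let i ∈ {1,...,d}, and assume Γ = (X, R_i) is connected; let H be the unweighted distribution diagram of R_i. Then for every pair (a,b) ∈ R_j, the path-length distance from a to b in Γ equals the path-length distance from 0 to j in H. -/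
section Aux

variable {X : Type*} [Fintype X] {d : ℕ}

namespace SymAssocScheme

lemma ne_of_Ri' (A : SymAssocScheme X d) {i : Fin (d+1)} (hi : i ≠ 0) {a c : X}
    (h : A.R i a c) : a ≠ c := by
  rintro rfl
  exact hi ((A.R_unique a a).unique h ((A.R_zero a a).mpr rfl))

lemma p_pos_iff' (A : SymAssocScheme X d) (i j k : Fin (d+1)) :
    0 < A.p i j k ↔ ∃ a b c, A.R k a b ∧ A.R i a c ∧ A.R j c b := by
  constructor
  · intro hp
    obtain ⟨a, b, hab⟩ := A.R_nonempty k
    have hs := A.p_spec i j k a b hab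
    have hne : {c : X | A.R i a c ∧ A.R j c b}.Nonempty :=
      Set.nonempty_of_ncard_ne_zero (by omega)
    obtain ⟨c, hc1, hc2⟩ := hne
    exact ⟨a, b, c, hab, hc1, hc2⟩
  · rintro ⟨a, b, c, hab, h1, h2⟩
    have hs := A.p_spec i j k a b hab
    have hpos : 0 < ({c : X | A.R i a c ∧ A.R j c b}).ncard :=
      (Set.ncard_pos (Set.toFinite _)).mpr ⟨c, h1, h2⟩
    omega

lemma p_pos_swap' (A : SymAssocScheme X d) (i j k : Fin (d+1))
    (h : 0 < A.p i j k) : 0 < A.p i k j := by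
  rw [p_pos_iff'] at h ⊢
  obtain ⟨a, b, c, hab, h1, h2⟩ := h
  exact ⟨c, b, a, h2, A.R_symm i a c h1, hab⟩

lemma exists_mid' (A : SymAssocScheme X d) {i j k : Fin (d+1)} (hp : 0 < A.p i j k)
    {a b : X} (hab : A.R k a b) : ∃ c, A.R i a c ∧ A.R j c b := by
  have hs := A.p_spec i j k a b hab
  exact Set.nonempty_of_ncard_ne_zero (s := {c : X | A.R i a c ∧ A.R j c b}) (by omega)

lemma key1' (A : SymAssocScheme X d) (i : Fin (d+1)) :
    ∀ {a b : X} (w : (A.graph i).Walk a b) (j : Fin (d+1)), A.R j a b →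
    ∃ w' : (A.diagram i).Walk 0 j, w'.length ≤ w.length := by
  intro a b w
  induction w with
  | nil =>
    intro j hj
    have hj0 : j = 0 := (A.R_unique _ _).unique hj ((A.R_zero _ _).mpr rfl)
    subst hj0
    exact ⟨SimpleGraph.Walk.nil, le_refl 0⟩
  | @cons a c b h w ih =>
    intro j hj
    obtain ⟨j', hj', _⟩ := A.R_unique c b
    obtain ⟨w', hw'⟩ := ih j' hj'
    by_cases hjj : j' = j
    · subst hjj
      exact ⟨w', by simp only [SimpleGraph.Walk.length_cons]; omega⟩
    · have hp : 0 < A.p i j' j := by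
        rw [p_pos_iff']
        exact ⟨a, b, c, hj, h.2, hj'⟩
      refine ⟨w'.concat (show (A.diagram i).Adj j' j from ⟨hjj, by omega⟩), ?_⟩
      rw [SimpleGraph.Walk.length_concat, SimpleGraph.Walk.length_cons]
      omega

lemma key2' (A : SymAssocScheme X d) (i : Fin (d+1)) (hi : i ≠ 0) :
    ∀ {j k : Fin (d+1)} (w' : (A.diagram i).Walk j k) (a b : X), A.R j a b →
    ∃ c : X, A.R k c b ∧ ∃ w : (A.graph i).Walk a c, w.length ≤ w'.length := by
  intro j k w'
  induction w' with
  | nil =>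
    intro a b hab
    exact ⟨a, hab, SimpleGraph.Walk.nil, le_refl 0⟩
  | @cons j m k h rest ih =>
    intro a b hab
    have hp : 0 < A.p i m j := by
      rcases Nat.lt_or_ge 0 (A.p i m j) with hp | hp
      · exact hp
      · have h1 : 0 < A.p i j m := by have := h.2; omega
        exact A.p_pos_swap' i j m h1
    obtain ⟨c', hc1, hc2⟩ := A.exists_mid' hp hab
    obtain ⟨c, hck, w, hw⟩ := ih c' b hc2
    refine ⟨c, hck, SimpleGraph.Walk.cons (show (A.graph i).Adj a c' from ⟨A.ne_of_Ri' hi hc1, hc1⟩) w, ?_⟩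
    simp only [SimpleGraph.Walk.length_cons]
    omega

end SymAssocScheme

end Aux

open SymAssocScheme in
/-- Lemma 3.4: if `Γ = (X, R_i)` is connected with unweighted distribution diagram
`H`, then for `(a,b) ∈ R_j`, the distance from `a` to `b` in `Γ` equals the distance
from `0` to `j` in `H`. -/
theorem dist_eq_diagram_dist {X : Type*} [Fintype X] {d : ℕ}
    (A : SymAssocScheme X d) (i : Fin (d + 1)) (hi : i ≠ 0)
    (hconn : (A.graph i).Connected)
    (a b : X) (j : Fin (d + 1)) (hj : A.R j a b) :
    (A.graph i).dist a b = (A.diagram i).dist 0 j := by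
  obtain ⟨w, hwlen⟩ := (hconn a b).exists_walk_length_eq_dist
  obtain ⟨w0, hw0⟩ := A.key1' i w j hj
  apply le_antisymm
  · -- Γ.dist ≤ H.dist
    have hr : (A.diagram i).Reachable 0 j := ⟨w0⟩
    obtain ⟨w', hw'⟩ := hr.exists_walk_length_eq_dist
    obtain ⟨c, hc0, wg, hwg⟩ := A.key2' i hi w'.reverse a b hj
    have hcb : c = b := (A.R_zero c b).mp hc0
    subst hcb
    calc (A.graph i).dist a c ≤ wg.length := SimpleGraph.dist_le wg
      _ ≤ w'.reverse.length := hwg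
      _ = (A.diagram i).dist 0 j := by rw [SimpleGraph.Walk.length_reverse, hw']
  · calc (A.diagram i).dist 0 j ≤ w0.length := SimpleGraph.dist_le w0
      _ ≤ w.length := hw0
      _ = (A.graph i).dist a b := hwlen
end

section
/- Let (X, {R_0,...,R_d}) be a symmetric association scheme, let i ∈ {1,...,d}, assume Γ = (X, R_i) is connected, and let H be the unweighted distribution diagram of R_i. If the induced subgraph H \ {0,i} is not connected, then for every a ∈ X the induced subgraph Γ \ a^⊥ is also disconnected; moreover, if j and k lie in distinct components of H \ {0,i}, then Γ \ a^⊥ contains no path from a vertex of R_j(a) to a vertex of R_k(a). -/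
namespace SymAssocScheme

variable {X : Type*} [Fintype X] {d : ℕ}

lemma rel_eq (A : SymAssocScheme X d) {j k : Fin (d + 1)} {a b : X}
    (hj : A.R j a b) (hk : A.R k a b) : j = k :=
  (A.R_unique a b).unique hj hk

lemma exists_rel (A : SymAssocScheme X d) (j : Fin (d + 1)) (a : X) :
    ∃ x, A.R j a x := by
  obtain ⟨a₀, b₀, h⟩ := A.R_nonempty j
  have hpos : 0 < A.p j j 0 := by
    rw [← A.p_spec j j 0 a₀ a₀ ((A.R_zero a₀ a₀).mpr rfl)]
    exact (Set.ncard_pos (Set.toFinite _)).mpr ⟨b₀, h, A.R_symm _ _ _ h⟩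
  have h2 := A.p_spec j j 0 a a ((A.R_zero a a).mpr rfl)
  have hne : ({c | A.R j a c ∧ A.R j c a}).Nonempty := by
    rw [← Set.ncard_pos (Set.toFinite _), h2]; exact hpos
  obtain ⟨x, hx, -⟩ := hne
  exact ⟨x, hx⟩

lemma step (A : SymAssocScheme X d) (i : Fin (d + 1)) {a x y : X}
    (hxy : (A.graph i).Adj x y) {j l : Fin (d + 1)}
    (hj : A.R j a x) (hl : A.R l a y) :
    j = l ∨ (A.diagram i).Adj j l := by
  by_cases h : j = l
  · exact Or.inl h
  · refine Or.inr ⟨h, ?_⟩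
    have hspec := A.p_spec i l j x a (A.R_symm _ _ _ hj)
    have hp : 0 < A.p i l j := by
      rw [← hspec]
      exact (Set.ncard_pos (Set.toFinite _)).mpr ⟨y, hxy.2, A.R_symm _ _ _ hl⟩
    omega

lemma walk_to_diagram (A : SymAssocScheme X d) (i : Fin (d + 1)) (a : X)
    {x y : {x : X | x ≠ a ∧ ¬ (A.graph i).Adj a x}}
    (w : ((A.graph i).induce {x : X | x ≠ a ∧ ¬ (A.graph i).Adj a x}).Walk x y)
    {j k : Fin (d + 1)} (hj : j ≠ 0 ∧ j ≠ i) (hk : k ≠ 0 ∧ k ≠ i)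
    (hjx : A.R j a x.1) (hky : A.R k a y.1) :
    ((A.diagram i).induce {l : Fin (d + 1) | l ≠ 0 ∧ l ≠ i}).Reachable ⟨j, hj⟩ ⟨k, hk⟩ := by
  induction w generalizing j with
  | nil =>
    have : j = k := A.rel_eq hjx hky
    subst this
    rfl
  | @cons u v _ h w ih =>
    obtain ⟨l, hl⟩ := (A.R_unique a v.1).exists
    have hl0 : l ≠ 0 := by
      intro h0; subst h0
      exact v.2.1 ((A.R_zero a v.1).mp hl).symm
    have hli : l ≠ i := by
      intro h0; subst h0
      exact v.2.2 ⟨fun he => v.2.1 he.symm, hl⟩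
    have hadj : (A.graph i).Adj u.1 v.1 := h
    have hstep := A.step i hadj hjx hl
    have hrest := ih ⟨hl0, hli⟩ hl hky
    rcases hstep with heq | hadj'
    · subst heq; exact hrest
    · exact SimpleGraph.Reachable.trans
        (SimpleGraph.Adj.reachable (by exact hadj' :
          ((A.diagram i).induce {l : Fin (d + 1) | l ≠ 0 ∧ l ≠ i}).Adj ⟨j, hj⟩ ⟨l, hl0, hli⟩))
        hrest

end SymAssocScheme

open SymAssocScheme in
/-- Proposition 3.5: if `H \ {0, i}` is disconnected, then for every `a ∈ X` the
graph `Γ \ a^⊥` is disconnected; moreover if `j` and `k` lie in distinct components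
of `H \ {0, i}`, then `Γ \ a^⊥` contains no path from `R_j(a)` to `R_k(a)`. -/
theorem diagram_disconnected_implies_local_disconnected {X : Type*} [Fintype X] {d : ℕ}
    (A : SymAssocScheme X d) (i : Fin (d + 1)) (hi : i ≠ 0)
    (hconn : (A.graph i).Connected)
    (hH : ¬ ((A.diagram i).induce {j : Fin (d + 1) | j ≠ 0 ∧ j ≠ i}).Connected) :
    ∀ a : X,
      (¬ ((A.graph i).induce {x : X | x ≠ a ∧ ¬ (A.graph i).Adj a x}).Connected) ∧
      (∀ (j k : Fin (d + 1)) (hj : j ≠ 0 ∧ j ≠ i) (hk : k ≠ 0 ∧ k ≠ i),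
        ¬ ((A.diagram i).induce {l : Fin (d + 1) | l ≠ 0 ∧ l ≠ i}).Reachable
            ⟨j, hj⟩ ⟨k, hk⟩ →
        ∀ (x y : {x : X | x ≠ a ∧ ¬ (A.graph i).Adj a x}),
          A.R j a x.1 → A.R k a y.1 →
          ¬ ((A.graph i).induce {x : X | x ≠ a ∧ ¬ (A.graph i).Adj a x}).Reachable x y) := by

  intro a
  -- the key claim: part 2
  have part2 : ∀ (j k : Fin (d + 1)) (hj : j ≠ 0 ∧ j ≠ i) (hk : k ≠ 0 ∧ k ≠ i),
      ¬ ((A.diagram i).induce {l : Fin (d + 1) | l ≠ 0 ∧ l ≠ i}).Reachable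
          ⟨j, hj⟩ ⟨k, hk⟩ →
      ∀ (x y : {x : X | x ≠ a ∧ ¬ (A.graph i).Adj a x}),
        A.R j a x.1 → A.R k a y.1 →
        ¬ ((A.graph i).induce {x : X | x ≠ a ∧ ¬ (A.graph i).Adj a x}).Reachable x y := by
    intro j k hj hk hnr x y hjx hky hr
    exact hnr (hr.elim fun w => A.walk_to_diagram i a w hj hk hjx hky)
  refine ⟨?_, part2⟩
  by_cases hne : Nonempty {l : Fin (d + 1) | l ≠ 0 ∧ l ≠ i}
  · -- H \ {0,i} is nonempty, so it is not preconnected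
    have hnp : ¬ ((A.diagram i).induce {l : Fin (d + 1) | l ≠ 0 ∧ l ≠ i}).Preconnected := by
      intro hp
      haveI := hne
      exact hH ⟨hp⟩
    simp only [SimpleGraph.Preconnected] at hnp
    push_neg at hnp
    obtain ⟨⟨j, hj⟩, ⟨k, hk⟩, hnr⟩ := hnp
    obtain ⟨x, hx⟩ := A.exists_rel j a
    obtain ⟨y, hy⟩ := A.exists_rel k a
    have hxmem : x ∈ {x : X | x ≠ a ∧ ¬ (A.graph i).Adj a x} := by
      constructor
      · intro h0; subst h0
        exact hj.1 (A.rel_eq hx ((A.R_zero x x).mpr rfl))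
      · intro hadj
        exact hj.2 (A.rel_eq (A.R_symm _ _ _ hx) (A.R_symm _ _ _ hadj.2))
    have hymem : y ∈ {x : X | x ≠ a ∧ ¬ (A.graph i).Adj a x} := by
      constructor
      · intro h0; subst h0
        exact hk.1 (A.rel_eq hy ((A.R_zero y y).mpr rfl))
      · intro hadj
        exact hk.2 (A.rel_eq (A.R_symm _ _ _ hy) (A.R_symm _ _ _ hadj.2))
    intro hc
    exact part2 j k hj hk hnr ⟨x, hxmem⟩ ⟨y, hymem⟩ hx hy
      (hc.preconnected ⟨x, hxmem⟩ ⟨y, hymem⟩)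
  · -- H \ {0,i} is empty, hence Γ \ a^⊥ is empty too
    intro hc
    obtain ⟨⟨x, hx1, hx2⟩⟩ := hc.nonempty
    obtain ⟨j, hjx⟩ := (A.R_unique a x).exists
    have hj0 : j ≠ 0 := by
      intro h0; subst h0
      exact hx1 ((A.R_zero a x).mp hjx).symm
    have hji : j ≠ i := by
      intro h0; subst h0
      exact hx2 ⟨fun he => hx1 he.symm, hjx⟩
    exact hne ⟨⟨j, hj0, hji⟩⟩
end

section
/- Let (X, {R_0,...,R_d}) be a symmetric association scheme, let i ∈ {1,...,d}, assume Γ = (X, R_i) is connected, and let a ∈ X. If x and y lie in distinct connected components of the induced subgraph Γ \ a^⊥, then Γ(x) ∩ Γ(y) ⊆ Γ(a). -/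
open SymAssocScheme in
/-- Proposition 3.6: if `x` and `y` lie in distinct connected components of
`Γ \ a^⊥`, then `Γ(x) ∩ Γ(y) ⊆ Γ(a)`. -/
theorem common_neighbors_subset {X : Type*} [Fintype X] {d : ℕ}
    (A : SymAssocScheme X d) (i : Fin (d + 1)) (hi : i ≠ 0)
    (hconn : (A.graph i).Connected) (a x y : X)
    (hx : x ∈ {z : X | z ≠ a ∧ ¬ (A.graph i).Adj a z})
    (hy : y ∈ {z : X | z ≠ a ∧ ¬ (A.graph i).Adj a z})
    (hsep : ¬ ((A.graph i).induce {z : X | z ≠ a ∧ ¬ (A.graph i).Adj a z}).Reachable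
        ⟨x, hx⟩ ⟨y, hy⟩) :
    (A.graph i).neighborSet x ∩ (A.graph i).neighborSet y ⊆
      (A.graph i).neighborSet a := by
  intro c hc
  obtain ⟨hcx, hcy⟩ := hc
  rw [SimpleGraph.mem_neighborSet] at hcx hcy
  by_contra hna
  have hca : c ≠ a := by
    rintro rfl
    exact hx.2 ((A.graph i).adj_symm hcx)
  have hc' : c ∈ {z : X | z ≠ a ∧ ¬ (A.graph i).Adj a z} := ⟨hca, hna⟩
  apply hsep
  have h1 : ((A.graph i).induce {z : X | z ≠ a ∧ ¬ (A.graph i).Adj a z}).Adj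
      ⟨x, hx⟩ ⟨c, hc'⟩ := by
    simp [SimpleGraph.induce]
    exact hcx
  have h2 : ((A.graph i).induce {z : X | z ≠ a ∧ ¬ (A.graph i).Adj a z}).Adj
      ⟨c, hc'⟩ ⟨y, hy⟩ := by
    simp [SimpleGraph.induce]
    exact hcy.symm
  exact h1.reachable.trans h2.reachable
end

section
/- Let (X, {R_0,...,R_d}) be a symmetric association scheme with Γ = (X, R_1) connected, H the unweighted distribution diagram of R_1, and suppose H' = H \ {0,1} is disconnected. Let Ĩ = {i : 1 ≤ i ≤ d, p_{11}^i = p_{11}^0}, let Ũ be the vertex set of a connected component of H' having more than one vertex which minimizes Σ_{i∈Ũ} v_i among all such components, and let W̃ = {2,...,d} \ (Ĩ ∪ Ũ). If W̃ ≠ ∅, then for every x ∈ X and every u ∈ X with (x,u) ∈ R_h for some h ∈ Ũ, the distance from x to u in Γ equals 2. -/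
namespace SymAssocScheme

variable {X : Type*} [Fintype X] {d : ℕ}

/-- The class (color) of a pair. -/
noncomputable def cls (A : SymAssocScheme X d) (a b : X) : Fin (d + 1) :=
  (A.R_unique a b).choose

variable {A : SymAssocScheme X d}

lemma cls_spec (a b : X) : A.R (A.cls a b) a b :=
  (A.R_unique a b).choose_spec.1

lemma cls_eq {m : Fin (d + 1)} {a b : X} (h : A.R m a b) : A.cls a b = m :=
  ((A.R_unique a b).choose_spec.2 m h).symm

lemma R0 (a : X) : A.R 0 a a := (A.R_zero a a).mpr rfl

lemma R_eq {i j : Fin (d + 1)} {a b : X} (h1 : A.R i a b) (h2 : A.R j a b) : i = j :=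
  (cls_eq h1).symm.trans (cls_eq h2)

lemma cls_self (a : X) : A.cls a a = 0 := cls_eq (R0 a)

lemma cls_eq_zero {a b : X} : A.cls a b = 0 ↔ a = b := by
  constructor
  · intro h
    have := cls_spec (A := A) a b
    rw [h] at this
    exact (A.R_zero a b).mp this
  · rintro rfl; exact cls_self a

lemma cls_symm (a b : X) : A.cls a b = A.cls b a :=
  (cls_eq (A.R_symm _ b a (cls_spec b a))).symm ▸ rfl

lemma ppos {i j k : Fin (d + 1)} {a b c : X} (hk : A.R k a b) (hi : A.R i a c)
    (hj : A.R j c b) : 0 < A.p i j k := by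
  rw [← A.p_spec i j k a b hk]
  exact (Set.ncard_pos (Set.toFinite _)).mpr ⟨c, hi, hj⟩

lemma pwit {i j k : Fin (d + 1)} {a b : X} (hp : 0 < A.p i j k) (hk : A.R k a b) :
    ∃ c, A.R i a c ∧ A.R j c b := by
  rw [← A.p_spec i j k a b hk] at hp
  exact (Set.ncard_pos (Set.toFinite _)).mp hp

lemma pcomm (i j k : Fin (d + 1)) : A.p i j k = A.p j i k := by
  obtain ⟨a, b, hab⟩ := A.R_nonempty k
  have hba := A.R_symm k a b hab
  rw [← A.p_spec i j k a b hab, ← A.p_spec j i k b a hba]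
  congr 1
  ext c
  simp only [Set.mem_setOf_eq]
  constructor
  · rintro ⟨h1, h2⟩; exact ⟨A.R_symm _ _ _ h2, A.R_symm _ _ _ h1⟩
  · rintro ⟨h1, h2⟩; exact ⟨A.R_symm _ _ _ h2, A.R_symm _ _ _ h1⟩

lemma v_pos {m : Fin (d + 1)} {a b : X} (h : A.R m a b) : 0 < A.p m m 0 :=
  ppos (R0 a) h (A.R_symm _ _ _ h)

lemma hstep {k : Fin (d + 1)} {x z z' : X} (hk : A.R k x z) (hz : A.R 1 z z') :
    A.cls x z' = k ∨ (A.diagram 1).Adj (A.cls x z') k := by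
  by_cases he : A.cls x z' = k
  · exact Or.inl he
  · refine Or.inr ⟨he, ?_⟩
    have h1 : 0 < A.p k 1 (A.cls x z') := ppos (cls_spec x z') hk hz
    have h2 : A.p k 1 (A.cls x z') = A.p 1 k (A.cls x z') := pcomm _ _ _
    omega

/-- The connected component of a class in `H \ {0,1}`. -/
def cmp (A : SymAssocScheme X d) (m : Fin (d + 1)) (hm : m ≠ 0 ∧ m ≠ 1) :
    ((A.diagram 1).induce {j : Fin (d + 1) | j ≠ 0 ∧ j ≠ 1}).ConnectedComponent :=
  SimpleGraph.connectedComponentMk _ ⟨m, hm⟩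

lemma cmp_adj {m m' : Fin (d + 1)} (hAdj : (A.diagram 1).Adj m m')
    (hm : m ≠ 0 ∧ m ≠ 1) (hm' : m' ≠ 0 ∧ m' ≠ 1) :
    cmp A m hm = cmp A m' hm' :=
  SimpleGraph.ConnectedComponent.connectedComponentMk_eq_of_adj hAdj

lemma chainstep {g : Fin (d + 1)} (hg : g ≠ 0 ∧ g ≠ 1) {y z z' : X}
    (hR : A.R g y z) (hz : A.R 1 z z') :
    A.cls y z' = 0 ∨ A.cls y z' = 1 ∨
      ∃ hV : A.cls y z' ≠ 0 ∧ A.cls y z' ≠ 1, cmp A (A.cls y z') hV = cmp A g hg := by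
  rcases hstep hR hz with he | hAdj
  · refine Or.inr (Or.inr ⟨?_, ?_⟩)
    · rw [he]; exact hg
    · simp only [he]
  · by_cases h0 : A.cls y z' = 0
    · exact Or.inl h0
    · by_cases h1 : A.cls y z' = 1
      · exact Or.inr (Or.inl h1)
      · exact Or.inr (Or.inr ⟨⟨h0, h1⟩, cmp_adj hAdj ⟨h0, h1⟩ hg⟩)

lemma NN {j : Fin (d + 1)} {a b w : X} (hj : A.p 1 1 j = A.p 1 1 0)
    (hab : A.R j a b) (haw : A.R 1 a w) : A.R 1 w b := by
  have h1 : {c : X | A.R 1 a c ∧ A.R 1 c b}.ncard = A.p 1 1 j := A.p_spec 1 1 j a b hab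
  have h2 : {c : X | A.R 1 a c ∧ A.R 1 c a}.ncard = A.p 1 1 0 := A.p_spec 1 1 0 a a (R0 a)
  have hset : {c : X | A.R 1 a c ∧ A.R 1 c a} = {c : X | A.R 1 a c} := by
    ext c
    simp only [Set.mem_setOf_eq, and_iff_left_iff_imp]
    exact fun h => A.R_symm _ _ _ h
  have hsub : {c : X | A.R 1 a c ∧ A.R 1 c b} ⊆ {c : X | A.R 1 a c} := fun c hc => hc.1
  have hle : {c : X | A.R 1 a c}.ncard ≤ {c : X | A.R 1 a c ∧ A.R 1 c b}.ncard := by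
    rw [h1, hj, ← h2, hset]
  have heq := Set.eq_of_subset_of_ncard_le hsub hle (Set.toFinite _)
  have hw : w ∈ {c : X | A.R 1 a c ∧ A.R 1 c b} := by rw [heq]; exact haw
  exact hw.2

lemma Itil_one {j m : Fin (d + 1)} (hj : A.p 1 1 j = A.p 1 1 0)
    (hAdj : (A.diagram 1).Adj j m) : m = 1 := by
  obtain ⟨hne, hpos⟩ := hAdj
  rcases Nat.lt_or_ge 0 (A.p 1 j m) with hjm | hjm
  · obtain ⟨a, b, hab⟩ := A.R_nonempty m
    obtain ⟨c, h1ac, hjcb⟩ := pwit hjm hab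
    have h1ab : A.R 1 a b := NN hj hjcb (A.R_symm _ _ _ h1ac)
    exact R_eq hab h1ab
  · have hmj : 0 < A.p 1 m j := by omega
    obtain ⟨a, b, hab⟩ := A.R_nonempty j
    obtain ⟨c, h1ac, hmcb⟩ := pwit hmj hab
    have h1cb : A.R 1 c b := NN hj hab h1ac
    exact R_eq hmcb h1cb

lemma walkcross {V : Type*} {G : SimpleGraph V} (Pr : V → Prop) :
    ∀ {a b : V}, G.Walk a b → Pr a → ¬ Pr b →
      ∃ z z', G.Adj z z' ∧ Pr z ∧ ¬ Pr z' := by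
  intro a b p
  induction p with
  | nil => intro ha hb; exact absurd ha hb
  | @cons u v w h q ih =>
    intro ha hb
    by_cases hv : Pr v
    · exact ih hv hb
    · exact ⟨u, v, h, ha, hv⟩

lemma F2 {x u y : X} (hu : A.cls x u ≠ 0 ∧ A.cls x u ≠ 1)
    (hfar : A.p 1 1 (A.cls x u) = 0)
    (hy : A.cls x y ≠ 0 ∧ A.cls x y ≠ 1)
    (hne : cmp A (A.cls x u) hu ≠ cmp A (A.cls x y) hy) :
    u ≠ y ∧ ¬ A.R 1 u y ∧ ∀ w, ¬ (A.R 1 u w ∧ A.R 1 w y) := by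
  refine ⟨?_, ?_, ?_⟩
  · rintro rfl; exact hne rfl
  · intro h1uy
    rcases chainstep hu (cls_spec x u) h1uy with h0 | h1 | ⟨hV, hc⟩
    · exact hy.1 h0
    · exact hy.2 h1
    · exact hne hc.symm
  · rintro w ⟨h1uw, h1wy⟩
    rcases chainstep hu (cls_spec x u) h1uw with h0 | h1 | ⟨hVa, hca⟩
    · have hwx : x = w := cls_eq_zero.mp h0
      subst hwx
      exact hu.2 (cls_eq (A.R_symm _ _ _ h1uw))
    · have h1xw : A.R 1 x w := by rw [← h1]; exact cls_spec x w
      have : 0 < A.p 1 1 (A.cls x u) := ppos (cls_spec x u) h1xw (A.R_symm _ _ _ h1uw)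
      omega
    · rcases chainstep hy (cls_spec x y) (A.R_symm _ _ _ h1wy) with h0 | h1 | ⟨hVb, hcb⟩
      · exact hVa.1 h0
      · exact hVa.2 h1
      · exact hne (hca.symm.trans hcb)

lemma config (hconn : (A.graph 1).Connected) (x : X) {h₀ : Fin (d + 1)}
    (h₀V : h₀ ≠ 0 ∧ h₀ ≠ 1) (h₀far : A.p 1 1 h₀ = 0) :
    ∃ c c₂ u, A.R 1 x c ∧ A.R 1 c c₂ ∧ A.R 1 c₂ u ∧
      ∃ (hV2 : A.cls x c₂ ≠ 0 ∧ A.cls x c₂ ≠ 1) (hV3 : A.cls x u ≠ 0 ∧ A.cls x u ≠ 1),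
        cmp A (A.cls x c₂) hV2 = cmp A h₀ h₀V ∧ cmp A (A.cls x u) hV3 = cmp A h₀ h₀V ∧
        0 < A.p 1 1 (A.cls x c₂) ∧ A.p 1 1 (A.cls x u) = 0 := by
  obtain ⟨a, b, hab⟩ := A.R_nonempty h₀
  obtain ⟨y, hy, -⟩ := pwit (v_pos hab) (R0 x)
  have hreach : (A.graph 1).Reachable y x := hconn.preconnected y x
  obtain ⟨pw⟩ := hreach
  have hPy : (fun z => ∃ hz : A.cls x z ≠ 0 ∧ A.cls x z ≠ 1,
      cmp A (A.cls x z) hz = cmp A h₀ h₀V ∧ A.p 1 1 (A.cls x z) = 0) y := by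
    refine ⟨?_, ?_, ?_⟩
    · rw [cls_eq hy]; exact h₀V
    · simp only [cls_eq hy]
    · rw [cls_eq hy]; exact h₀far
  have hPx : ¬ (fun z => ∃ hz : A.cls x z ≠ 0 ∧ A.cls x z ≠ 1,
      cmp A (A.cls x z) hz = cmp A h₀ h₀V ∧ A.p 1 1 (A.cls x z) = 0) x := by
    rintro ⟨hz, -⟩
    exact hz.1 (cls_self x)
  obtain ⟨z, z', hadj, hPz, hPz'⟩ := walkcross (fun z => ∃ hz : A.cls x z ≠ 0 ∧ A.cls x z ≠ 1,
      cmp A (A.cls x z) hz = cmp A h₀ h₀V ∧ A.p 1 1 (A.cls x z) = 0) pw hPy hPx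
  obtain ⟨hgV, hgc, hgfar⟩ := hPz
  have hR1zz' : A.R 1 z z' := hadj.2
  rcases hstep (cls_spec x z) hR1zz' with he | hAdj
  · exfalso
    apply hPz'
    refine ⟨?_, ?_, ?_⟩
    · rw [he]; exact hgV
    · simp only [he]; exact hgc
    · rw [he]; exact hgfar
  · by_cases h0 : A.cls x z' = 0
    · exfalso
      have hxz' : x = z' := cls_eq_zero.mp h0
      subst hxz'
      exact hgV.2 (cls_eq (A.R_symm _ _ _ hR1zz'))
    · by_cases h1 : A.cls x z' = 1
      · exfalso
        have h1xz' : A.R 1 x z' := by rw [← h1]; exact cls_spec x z'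
        have : 0 < A.p 1 1 (A.cls x z) :=
          ppos (cls_spec x z) h1xz' (A.R_symm _ _ _ hR1zz')
        omega
      · have hV' : A.cls x z' ≠ 0 ∧ A.cls x z' ≠ 1 := ⟨h0, h1⟩
        have hc' : cmp A (A.cls x z') hV' = cmp A h₀ h₀V :=
          (cmp_adj hAdj hV' hgV).trans hgc
        have hnear : 0 < A.p 1 1 (A.cls x z') := by
          by_contra hn
          exact hPz' ⟨hV', hc', by omega⟩
        obtain ⟨cc, h1xc, h1cz'⟩ := pwit hnear (cls_spec x z')
        exact ⟨cc, z', z, h1xc, h1cz', A.R_symm _ _ _ hR1zz', hV', hgV, hc', hgc, hnear, hgfar⟩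

lemma L1 (hconn : (A.graph 1).Connected) {g₁ g₂ : Fin (d + 1)}
    (hV₁ : g₁ ≠ 0 ∧ g₁ ≠ 1) (hV₂ : g₂ ≠ 0 ∧ g₂ ≠ 1)
    (hf₁ : A.p 1 1 g₁ = 0) (hf₂ : A.p 1 1 g₂ = 0) :
    cmp A g₁ hV₁ = cmp A g₂ hV₂ := by
  by_contra hne
  obtain ⟨x, -, -⟩ := A.R_nonempty 0
  obtain ⟨c, c₂, u, hxc, hcc2, hc2u, hV2, hV3, hm2c, hh'c, hm2near, hh'far⟩ :=
    config hconn x hV₁ hf₁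
  obtain ⟨e, e₂, y₃, hxe, hee2, he2y, hW2, hW3, hn2c, hn3c, hn2near, hn3far⟩ :=
    config hconn x hV₂ hf₂
  have hcomp_ne : cmp A (A.cls x u) hV3 ≠ cmp A (A.cls x y₃) hW3 := by
    intro he
    exact hne ((hh'c.symm.trans he).trans hn3c)
  obtain ⟨hney, hnadj, hnocw⟩ := F2 hV3 hh'far hW3 hcomp_ne
  have hy3x : A.R (A.cls x y₃) y₃ x := A.R_symm _ _ _ (cls_spec x y₃)
  rcases chainstep hW3 hy3x hxc with h0 | h1 | ⟨hr1V, hr1c⟩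
  · have : y₃ = c := cls_eq_zero.mp h0
    subst this
    exact hW3.2 (cls_eq hxc)
  · have h1yc : A.R 1 y₃ c := by rw [← h1]; exact cls_spec y₃ c
    have : 0 < A.p 1 1 (A.cls x y₃) := ppos (cls_spec x y₃) hxc (A.R_symm _ _ _ h1yc)
    omega
  · rcases chainstep hr1V (cls_spec y₃ c) hcc2 with h0 | h1 | ⟨hr2V, hr2c⟩
    · have : y₃ = c₂ := cls_eq_zero.mp h0
      subst this
      exact hne (hm2c.symm.trans hn3c)
    · have h1yc2 : A.R 1 y₃ c₂ := by rw [← h1]; exact cls_spec y₃ c₂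
      exact hnocw c₂ ⟨A.R_symm _ _ _ hc2u, A.R_symm _ _ _ h1yc2⟩
    · rcases chainstep hr2V (cls_spec y₃ c₂) hc2u with h0 | h1 | ⟨hr3V, hr3c⟩
      · exact hney (cls_eq_zero.mp h0).symm
      · have h1yu : A.R 1 y₃ u := by rw [← h1]; exact cls_spec y₃ u
        exact hnadj (A.R_symm _ _ _ h1yu)
      · have hux : A.R (A.cls x u) u x := A.R_symm _ _ _ (cls_spec x u)
        rcases chainstep hV3 hux hxe with s0 | s1 | ⟨hs1V, hs1c⟩
        · have : u = e := cls_eq_zero.mp s0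
          subst this
          exact hV3.2 (cls_eq hxe)
        · have h1ue : A.R 1 u e := by rw [← s1]; exact cls_spec u e
          have : 0 < A.p 1 1 (A.cls x u) := ppos (cls_spec x u) hxe (A.R_symm _ _ _ h1ue)
          omega
        · rcases chainstep hs1V (cls_spec u e) hee2 with s0 | s1 | ⟨hs2V, hs2c⟩
          · have : u = e₂ := cls_eq_zero.mp s0
            subst this
            exact hne ((hh'c.symm.trans hn2c))
          · have h1ue2 : A.R 1 u e₂ := by rw [← s1]; exact cls_spec u e₂
            exact hnocw e₂ ⟨h1ue2, he2y⟩
          · rcases chainstep hs2V (cls_spec u e₂) he2y with s0 | s1 | ⟨hs3V, hs3c⟩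
            · exact hney (cls_eq_zero.mp s0)
            · have h1uy : A.R 1 u y₃ := by rw [← s1]; exact cls_spec u y₃
              exact hnadj h1uy
            · have e1 : cmp A (A.cls u y₃) hs3V = cmp A g₁ hV₁ :=
                hs3c.trans (hs2c.trans (hs1c.trans hh'c))
              have e2 : cmp A (A.cls y₃ u) hr3V = cmp A g₂ hV₂ :=
                hr3c.trans (hr2c.trans (hr1c.trans hn3c))
              have hsub : (⟨A.cls u y₃, hs3V⟩ :
                  {j : Fin (d + 1) | j ≠ 0 ∧ j ≠ 1}) = ⟨A.cls y₃ u, hr3V⟩ :=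
                Subtype.ext (cls_symm u y₃)
              rw [cmp, hsub] at e1
              exact hne (e1.symm.trans e2)

lemma class_card (x : X) (m : Fin (d + 1)) :
    {y : X | A.cls x y = m}.ncard = A.p m m 0 := by
  have h := A.p_spec m m 0 x x (R0 x)
  have hseteq : {y : X | A.cls x y = m} = {c : X | A.R m x c ∧ A.R m c x} := by
    ext y
    simp only [Set.mem_setOf_eq]
    constructor
    · intro hy
      have hr : A.R m x y := by rw [← hy]; exact cls_spec x y
      exact ⟨hr, A.R_symm _ _ _ hr⟩
    · rintro ⟨hr, -⟩
      exact cls_eq hr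
  rw [hseteq, h]

lemma classes_card (x : X) (K : Finset (Fin (d + 1))) :
    {y : X | A.cls x y ∈ K}.ncard = ∑ m ∈ K, A.p m m 0 := by
  classical
  induction K using Finset.induction_on with
  | empty => simp
  | @insert a s ha ih =>
    have hsplit : {y : X | A.cls x y ∈ insert a s} =
        {y : X | A.cls x y = a} ∪ {y : X | A.cls x y ∈ s} := by
      ext y; simp [Finset.mem_insert]
    have hdisj : Disjoint {y : X | A.cls x y = a} {y : X | A.cls x y ∈ s} := by
      rw [Set.disjoint_left]
      intro y hy1 hy2
      simp only [Set.mem_setOf_eq] at hy1 hy2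
      rw [hy1] at hy2
      exact ha hy2
    rw [hsplit, Set.ncard_union_eq hdisj (Set.toFinite _) (Set.toFinite _), ih, class_card,
      Finset.sum_insert ha]

end SymAssocScheme
open SymAssocScheme in
/-- Lemma 3.7: with `Γ = (X, R_1)` connected, `H' = H \ {0,1}` disconnected,
`Ĩ = {i ≠ 0 : p_{11}^i = p_{11}^0}`, `Ũ` the vertex set of a non-singleton component
of `H'` minimizing `∑_{i ∈ Ũ} v_i`, and `W̃ = {2,…,d} \ (Ĩ ∪ Ũ)` nonempty:
for every `x` and every `u` with `(x,u) ∈ R_h` for some `h ∈ Ũ`, `d_Γ(x,u) = 2`. -/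
theorem dist_two_of_U {X : Type*} [Fintype X] {d : ℕ} (hd : 0 < d)
    (A : SymAssocScheme X d) (hconn : (A.graph 1).Connected)
    (hH' : ¬ ((A.diagram 1).induce {j : Fin (d + 1) | j ≠ 0 ∧ j ≠ 1}).Connected)
    (Itil : Set (Fin (d + 1)))
    (hI : Itil = {j : Fin (d + 1) | j ≠ 0 ∧ A.p 1 1 j = A.p 1 1 0})
    (Util : Finset (Fin (d + 1)))
    (hU : ∃ c : ((A.diagram 1).induce
          {j : Fin (d + 1) | j ≠ 0 ∧ j ≠ 1}).ConnectedComponent,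
        (Util : Set (Fin (d + 1))) = Subtype.val '' c.supp ∧ c.supp.Nontrivial)
    (hUmin : ∀ U' : Finset (Fin (d + 1)),
        (∃ c : ((A.diagram 1).induce
            {j : Fin (d + 1) | j ≠ 0 ∧ j ≠ 1}).ConnectedComponent,
          (U' : Set (Fin (d + 1))) = Subtype.val '' c.supp ∧ c.supp.Nontrivial) →
        ∑ j ∈ Util, A.p j j 0 ≤ ∑ j ∈ U', A.p j j 0)
    (Wtil : Set (Fin (d + 1)))
    (hW : Wtil = {j : Fin (d + 1) | j ≠ 0 ∧ j ≠ 1 ∧ j ∉ Itil ∧ j ∉ Util})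
    (hWne : Wtil.Nonempty) :
    ∀ (x u : X) (h : Fin (d + 1)), h ∈ Util → A.R h x u →
      (A.graph 1).dist x u = 2 := by
  classical
  obtain ⟨c, hUc, hcnt⟩ := hU
  have hmemU : ∀ m : Fin (d + 1), m ∈ Util ↔
      ∃ hm : m ≠ 0 ∧ m ≠ 1, cmp A m hm = c := by
    intro m
    constructor
    · intro hm
      have hm' : m ∈ (Util : Set (Fin (d + 1))) := Finset.mem_coe.mpr hm
      rw [hUc] at hm'
      obtain ⟨a, ha, rfl⟩ := hm'
      refine ⟨a.2, ?_⟩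
      rw [SimpleGraph.ConnectedComponent.mem_supp_iff] at ha
      exact ha
    · rintro ⟨hm, hc⟩
      have hm' : m ∈ (Util : Set (Fin (d + 1))) := by
        rw [hUc]
        exact ⟨⟨m, hm⟩, (SimpleGraph.ConnectedComponent.mem_supp_iff _ _).mpr hc, rfl⟩
      exact Finset.mem_coe.mp hm'
  intro x u h hhU hR
  obtain ⟨hVh, hch⟩ := (hmemU h).mp hhU
  have hone : (1 : Fin (d + 1)) ≠ 0 := by
    intro h1
    have h2 := congrArg Fin.val h1
    rw [Fin.val_one', Fin.val_zero, Nat.mod_eq_of_lt (by omega)] at h2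
    exact one_ne_zero h2
  have hR1_ne : ∀ a b : X, A.R 1 a b → a ≠ b := by
    intro a b h1 he
    subst he
    exact hone (R_eq h1 (R0 a))
  by_cases hfar : A.p 1 1 h = 0
  · exfalso
    obtain ⟨j₀, hj₀W⟩ := hWne
    rw [hW, Set.mem_setOf_eq] at hj₀W
    obtain ⟨hj₀0, hj₀1, hj₀I, hj₀U⟩ := hj₀W
    have hVj₀ : j₀ ≠ 0 ∧ j₀ ≠ 1 := ⟨hj₀0, hj₀1⟩
    have hcj₀ : cmp A j₀ hVj₀ ≠ c := fun he => hj₀U ((hmemU j₀).mpr ⟨hVj₀, he⟩)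
    have hj₀near : 0 < A.p 1 1 j₀ := by
      by_contra hn
      have hn0 : A.p 1 1 j₀ = 0 := by omega
      exact hcj₀ ((L1 hconn hVj₀ hVh hn0 hfar).trans hch)
    by_cases hsing : ∀ (m : Fin (d + 1)) (hm : m ≠ 0 ∧ m ≠ 1),
        cmp A m hm = cmp A j₀ hVj₀ → m = j₀
    · -- Case S : `{j₀}` is a singleton component
      have hpjj : 0 < A.p j₀ j₀ 1 := by
        by_contra hpj
        apply hj₀I
        rw [hI, Set.mem_setOf_eq]
        refine ⟨hj₀0, ?_⟩
        obtain ⟨a, b, hab⟩ := A.R_nonempty j₀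
        have hclaim : ∀ w, A.R 1 a w → A.R 1 w b := by
          intro w h1aw
          rcases hstep (A.R_symm _ _ _ hab) h1aw with he | hAdj
          · exfalso
            have hjbw : A.R j₀ b w := by rw [← he]; exact cls_spec b w
            exact hpj (ppos h1aw hab hjbw)
          · by_cases hbw0 : A.cls b w = 0
            · exfalso
              have hbweq : b = w := cls_eq_zero.mp hbw0
              subst hbweq
              exact hj₀1 (R_eq hab h1aw)
            · by_cases hbw1 : A.cls b w = 1
              · have h1bw : A.R 1 b w := by rw [← hbw1]; exact cls_spec b w
                exact A.R_symm _ _ _ h1bw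
              · exfalso
                have := hsing _ ⟨hbw0, hbw1⟩ (cmp_adj hAdj ⟨hbw0, hbw1⟩ hVj₀)
                exact hAdj.1 this
        have hca := A.p_spec 1 1 j₀ a b hab
        have hcb := A.p_spec 1 1 0 a a (R0 a)
        rw [← hca, ← hcb]
        congr 1
        ext w
        simp only [Set.mem_setOf_eq]
        constructor
        · rintro ⟨hw, -⟩; exact ⟨hw, A.R_symm _ _ _ hw⟩
        · rintro ⟨hw, -⟩; exact ⟨hw, hclaim w hw⟩
      obtain ⟨c', c₂, u', h1c, h2c, h3c, hV2, hV3, hm2c, hh'c, hm2near, hh'far⟩ :=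
        config hconn x hVh hfar
      obtain ⟨y, hyj₀, hyc'⟩ := pwit hpjj h1c
      have hclsxy : A.cls x y = j₀ := cls_eq hyj₀
      have hVxy : A.cls x y ≠ 0 ∧ A.cls x y ≠ 1 := by rw [hclsxy]; exact hVj₀
      have hcmpxy : cmp A (A.cls x y) hVxy = cmp A j₀ hVj₀ := by simp only [hclsxy]
      have hcneq : cmp A (A.cls x u') hV3 ≠ cmp A (A.cls x y) hVxy := by
        intro he
        exact hcj₀ (hcmpxy.symm.trans (he.symm.trans (hh'c.trans hch)))
      obtain ⟨hney, hnadj, hnocw⟩ := F2 hV3 hh'far hVxy hcneq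
      have hyc₂ : A.R j₀ y c₂ := by
        rcases hstep hyc' h2c with he | hAdj
        · rw [← he]; exact cls_spec y c₂
        · exfalso
          by_cases h0 : A.cls y c₂ = 0
          · have hyeq : y = c₂ := cls_eq_zero.mp h0
            subst hyeq
            exact hcj₀ (hcmpxy.symm.trans (hm2c.trans hch))
          · by_cases h1 : A.cls y c₂ = 1
            · have h1yc2 : A.R 1 y c₂ := by rw [← h1]; exact cls_spec y c₂
              exact hnocw c₂ ⟨A.R_symm _ _ _ h3c, A.R_symm _ _ _ h1yc2⟩
            · have := hsing _ ⟨h0, h1⟩ (cmp_adj hAdj ⟨h0, h1⟩ hVj₀)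
              exact hAdj.1 this
      rcases hstep hyc₂ h3c with he | hAdj
      · have hjyu : A.R j₀ y u' := by rw [← he]; exact cls_spec y u'
        obtain ⟨w, h1yw, h1wu⟩ := pwit hj₀near hjyu
        exact hnocw w ⟨A.R_symm _ _ _ h1wu, A.R_symm _ _ _ h1yw⟩
      · by_cases h0 : A.cls y u' = 0
        · exact hney (cls_eq_zero.mp h0).symm
        · by_cases h1 : A.cls y u' = 1
          · have h1yu : A.R 1 y u' := by rw [← h1]; exact cls_spec y u'
            exact hnadj (A.R_symm _ _ _ h1yu)
          · have := hsing _ ⟨h0, h1⟩ (cmp_adj hAdj ⟨h0, h1⟩ hVj₀)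
            exact hAdj.1 this
    · -- Case N : the component of `j₀` is nontrivial; counting argument
      push_neg at hsing
      obtain ⟨q, hqV, hqc, hqne⟩ := hsing
      have hfinQ : (Subtype.val '' (cmp A j₀ hVj₀).supp : Set (Fin (d + 1))).Finite :=
        Set.toFinite _
      set QF := hfinQ.toFinset with hQFdef
      have hQFcoe : (QF : Set (Fin (d + 1))) = Subtype.val '' (cmp A j₀ hVj₀).supp :=
        hfinQ.coe_toFinset
      have hQnt : (cmp A j₀ hVj₀).supp.Nontrivial := by
        refine ⟨⟨q, hqV⟩, ?_, ⟨j₀, hVj₀⟩, ?_, ?_⟩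
        · rw [SimpleGraph.ConnectedComponent.mem_supp_iff]; exact hqc
        · rw [SimpleGraph.ConnectedComponent.mem_supp_iff]; rfl
        · intro hcontr; exact hqne (congrArg Subtype.val hcontr)
      have hmin : ∑ j ∈ Util, A.p j j 0 ≤ ∑ j ∈ QF, A.p j j 0 :=
        hUmin QF ⟨cmp A j₀ hVj₀, hQFcoe, hQnt⟩
      have hmemQF : ∀ m : Fin (d + 1), m ∈ QF ↔
          ∃ hm : m ≠ 0 ∧ m ≠ 1, cmp A m hm = cmp A j₀ hVj₀ := by
        intro m
        constructor
        · intro hm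
          have hm' : m ∈ (QF : Set (Fin (d + 1))) := Finset.mem_coe.mpr hm
          rw [hQFcoe] at hm'
          obtain ⟨a, ha, rfl⟩ := hm'
          refine ⟨a.2, ?_⟩
          rw [SimpleGraph.ConnectedComponent.mem_supp_iff] at ha
          exact ha
        · rintro ⟨hm, hc⟩
          have hm' : m ∈ (QF : Set (Fin (d + 1))) := by
            rw [hQFcoe]
            exact ⟨⟨m, hm⟩, (SimpleGraph.ConnectedComponent.mem_supp_iff _ _).mpr hc, rfl⟩
          exact Finset.mem_coe.mp hm'
      set KW2 := Finset.univ.filter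
        (fun m : Fin (d + 1) => m ∈ Wtil ∧ 0 < A.p 1 1 m) with hKW2def
      set KUfar := Util.filter (fun m => A.p 1 1 m = 0) with hKUfardef
      have hQsub : QF ⊆ KW2 := by
        intro m hm
        obtain ⟨hmV, hmc⟩ := (hmemQF m).mp hm
        have hmnear : 0 < A.p 1 1 m := by
          by_contra hn
          have hn0 : A.p 1 1 m = 0 := by omega
          have hL := L1 hconn hmV hVh hn0 hfar
          exact hcj₀ ((hmc.symm.trans hL).trans hch)
        have hmI : m ∉ Itil := by
          intro hmIt
          rw [hI, Set.mem_setOf_eq] at hmIt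
          by_cases hmj : m = j₀
          · subst hmj
            exact hj₀I (by rw [hI, Set.mem_setOf_eq]; exact hmIt)
          · obtain ⟨pw⟩ := SimpleGraph.ConnectedComponent.exact hmc
            obtain ⟨z, z', hadj, hPz, hPz'⟩ := walkcross
              (fun v : {j : Fin (d + 1) | j ≠ 0 ∧ j ≠ 1} => v.val = m) pw rfl
              (fun hcontr => hmj hcontr.symm)
            have hadj' : (A.diagram 1).Adj z.val z'.val := hadj
            have hPz2 : z.val = m := hPz
            rw [hPz2] at hadj'
            have := Itil_one hmIt.2 hadj'
            exact z'.2.2 this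
        have hmW : m ∈ Wtil := by
          rw [hW, Set.mem_setOf_eq]
          refine ⟨hmV.1, hmV.2, hmI, ?_⟩
          intro hmU
          obtain ⟨hm', hc'⟩ := (hmemU m).mp hmU
          exact hcj₀ (hmc.symm.trans hc')
        rw [hKW2def]
        simp only [Finset.mem_filter, Finset.mem_univ, true_and]
        exact ⟨hmW, hmnear⟩
      have hsum1 : ∑ j ∈ QF, A.p j j 0 ≤ ∑ j ∈ KW2, A.p j j 0 :=
        Finset.sum_le_sum_of_subset hQsub
      obtain ⟨c', c₂, u', h1c, h2c, h3c, hV2, hV3, hm2c, hh'c, hm2near, hh'far⟩ :=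
        config hconn x hVh hfar
      have hYcard := classes_card (A := A) x KW2
      have hZcard := classes_card (A := A) u' KUfar
      have hxnotY : x ∉ {y : X | A.cls x y ∈ KW2} := by
        intro hx
        simp only [Set.mem_setOf_eq, cls_self] at hx
        rw [hKW2def] at hx
        simp only [Finset.mem_filter] at hx
        have h0W := hx.2.1
        rw [hW, Set.mem_setOf_eq] at h0W
        exact h0W.1 rfl
      have hu'Util : A.cls x u' ∈ Util := (hmemU _).mpr ⟨hV3, hh'c.trans hch⟩
      have hins : insert x {y : X | A.cls x y ∈ KW2} ⊆ {y : X | A.cls u' y ∈ KUfar} := by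
        intro y hy
        rcases Set.mem_insert_iff.mp hy with rfl | hyY
        · show A.cls u' y ∈ KUfar
          rw [cls_symm u' y, hKUfardef]
          simp only [Finset.mem_filter]
          exact ⟨hu'Util, hh'far⟩
        · have hyK : A.cls x y ∈ KW2 := hyY
          rw [hKW2def] at hyK
          simp only [Finset.mem_filter, Finset.mem_univ, true_and] at hyK
          obtain ⟨hyW, hynear⟩ := hyK
          rw [hW, Set.mem_setOf_eq] at hyW
          obtain ⟨hy0, hy1, hyI, hyU⟩ := hyW
          have hVxy : A.cls x y ≠ 0 ∧ A.cls x y ≠ 1 := ⟨hy0, hy1⟩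
          have hcneq : cmp A (A.cls x u') hV3 ≠ cmp A (A.cls x y) hVxy := by
            intro he
            exact hyU ((hmemU _).mpr ⟨hVxy, he.symm.trans (hh'c.trans hch)⟩)
          obtain ⟨hney, hnadj, hnocw⟩ := F2 hV3 hh'far hVxy hcneq
          have hg0 : A.cls u' y ≠ 0 := fun h0 => hney (cls_eq_zero.mp h0)
          have hg1 : A.cls u' y ≠ 1 := by
            intro h1
            have : A.R 1 u' y := by rw [← h1]; exact cls_spec u' y
            exact hnadj this
          have hgfar : A.p 1 1 (A.cls u' y) = 0 := by
            by_contra hn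
            obtain ⟨w, hw1, hw2⟩ := pwit (Nat.pos_of_ne_zero hn) (cls_spec u' y)
            exact hnocw w ⟨hw1, hw2⟩
          have hgU : A.cls u' y ∈ Util :=
            (hmemU _).mpr ⟨⟨hg0, hg1⟩, (L1 hconn ⟨hg0, hg1⟩ hVh hgfar hfar).trans hch⟩
          show A.cls u' y ∈ KUfar
          rw [hKUfardef]
          simp only [Finset.mem_filter]
          exact ⟨hgU, hgfar⟩
      have hcard : {y : X | A.cls x y ∈ KW2}.ncard + 1 ≤ {y : X | A.cls u' y ∈ KUfar}.ncard := by
        have ha := Set.ncard_insert_of_notMem hxnotY (Set.toFinite _)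
        have hb := Set.ncard_le_ncard hins (Set.toFinite _)
        omega
      rw [hYcard, hZcard] at hcard
      have hm2U : A.cls x c₂ ∈ Util := (hmemU _).mpr ⟨hV2, hm2c.trans hch⟩
      have hm2notK : A.cls x c₂ ∉ KUfar := by
        rw [hKUfardef]
        simp only [Finset.mem_filter, not_and]
        intro _
        omega
      have hinsUtil : insert (A.cls x c₂) KUfar ⊆ Util := by
        intro t ht
        rcases Finset.mem_insert.mp ht with rfl | htK
        · exact hm2U
        · rw [hKUfardef] at htK
          exact (Finset.mem_filter.mp htK).1
      have hbb : ∑ j ∈ insert (A.cls x c₂) KUfar, A.p j j 0 ≤ ∑ j ∈ Util, A.p j j 0 :=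
        Finset.sum_le_sum_of_subset hinsUtil
      rw [Finset.sum_insert hm2notK] at hbb
      have hv2 : 0 < A.p (A.cls x c₂) (A.cls x c₂) 0 := v_pos (cls_spec x c₂)
      omega
  · have hnear : 0 < A.p 1 1 h := Nat.pos_of_ne_zero hfar
    obtain ⟨w, hxw, hwu⟩ := pwit hnear hR
    have hxu : x ≠ u := by
      intro he
      subst he
      exact hVh.1 (R_eq hR (R0 x))
    have hadj1 : (A.graph 1).Adj x w := ⟨hR1_ne x w hxw, hxw⟩
    have hadj2 : (A.graph 1).Adj w u := ⟨hR1_ne w u hwu, hwu⟩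
    have hnadj : ¬ (A.graph 1).Adj x u := by
      rintro ⟨-, h1⟩
      exact hVh.2 (R_eq hR h1)
    have hle : (A.graph 1).dist x u ≤ 2 := by
      simpa using SimpleGraph.dist_le
        (SimpleGraph.Walk.cons hadj1 (SimpleGraph.Walk.cons hadj2 SimpleGraph.Walk.nil))
    have hne0 : (A.graph 1).dist x u ≠ 0 := by
      intro h0
      exact hxu (hconn.dist_eq_zero_iff.mp h0)
    have hne1 : (A.graph 1).dist x u ≠ 1 := by
      intro h1
      exact hnadj (SimpleGraph.dist_eq_one_iff_adj.mp h1)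
    omega
end
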